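/- arXiv:1407.0606 — 2 statements merged into one kernel-verified Lean document; each statement's English description precedes it below -/
import Mathlib

section
/- Let ω ∈ [-1,1] and λ ∈ ℂ. Define the 4×4 complex matrix M₀(λ,ω) = αJβ − ω αJ − αλ, where J = [[0, I₂],[−I₂, 0]], α = [[0, Im σ₂],[−Im σ₂, 0]], β = [[σ₃, 0],[0, σ₃]] (block 4×4 matrices built from the Pauli matrices). Then the spectrum of M₀(λ,ω) is {±√(1−(ω+iλ)²), ±√(1−(ω−iλ)²)}, i.e., z is an eigenvalue of M₀(λ,ω) if and only if z² − 1 + (iλ − ω)² = 0 or z² − 1 + (−iλ − ω)² = 0. -/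
open Matrix

/-- `Im σ₂ = [[0,-1],[1,0]]` (imaginary part of the Pauli matrix `σ₂`), over `ℂ`. -/
noncomputable def ImSigma2 : Matrix (Fin 2) (Fin 2) ℂ := !![0, -1; 1, 0]

/-- `σ₃ = [[1,0],[0,-1]]`, over `ℂ`. -/
noncomputable def Sigma3 : Matrix (Fin 2) (Fin 2) ℂ := !![1, 0; 0, -1]

/-- `J = [[0, I₂],[-I₂, 0]]` as a `4×4` block matrix. -/
noncomputable def Jmat : Matrix (Fin 2 ⊕ Fin 2) (Fin 2 ⊕ Fin 2) ℂ :=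
  Matrix.fromBlocks 0 1 (-1) 0

/-- `α = [[0, Im σ₂],[-Im σ₂, 0]]` as a `4×4` block matrix. -/
noncomputable def alphaMat : Matrix (Fin 2 ⊕ Fin 2) (Fin 2 ⊕ Fin 2) ℂ :=
  Matrix.fromBlocks 0 ImSigma2 (-ImSigma2) 0

/-- `β = diag(σ₃, σ₃)` as a `4×4` block matrix. -/
noncomputable def betaMat : Matrix (Fin 2 ⊕ Fin 2) (Fin 2 ⊕ Fin 2) ℂ :=
  Matrix.fromBlocks Sigma3 0 0 Sigma3

/-- `M₀(λ,ω) = αJβ − ω·αJ − λ·α`. -/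
noncomputable def M0 (lam : ℂ) (om : ℝ) : Matrix (Fin 2 ⊕ Fin 2) (Fin 2 ⊕ Fin 2) ℂ :=
  alphaMat * Jmat * betaMat - (om : ℂ) • (alphaMat * Jmat) - lam • alphaMat

lemma detfin4 (A : Matrix (Fin 4) (Fin 4) ℂ) :
    A.det = A 0 0 * (A 1 1 * (A 2 2 * A 3 3 - A 2 3 * A 3 2)
        - A 1 2 * (A 2 1 * A 3 3 - A 2 3 * A 3 1)
        + A 1 3 * (A 2 1 * A 3 2 - A 2 2 * A 3 1))
      - A 0 1 * (A 1 0 * (A 2 2 * A 3 3 - A 2 3 * A 3 2)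
        - A 1 2 * (A 2 0 * A 3 3 - A 2 3 * A 3 0)
        + A 1 3 * (A 2 0 * A 3 2 - A 2 2 * A 3 0))
      + A 0 2 * (A 1 0 * (A 2 1 * A 3 3 - A 2 3 * A 3 1)
        - A 1 1 * (A 2 0 * A 3 3 - A 2 3 * A 3 0)
        + A 1 3 * (A 2 0 * A 3 1 - A 2 1 * A 3 0))
      - A 0 3 * (A 1 0 * (A 2 1 * A 3 2 - A 2 2 * A 3 1)
        - A 1 1 * (A 2 0 * A 3 2 - A 2 2 * A 3 0)
        + A 1 2 * (A 2 0 * A 3 1 - A 2 1 * A 3 0)) := by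
  rw [Matrix.det_succ_row_zero]
  simp [Fin.sum_univ_succ, Matrix.det_fin_three,
    show (Fin.succ 2 : Fin 4) = 3 from rfl,
    show Fin.succAbove (2:Fin 4) 2 = 3 from rfl,
    show Fin.succAbove (1:Fin 4) 2 = 3 from rfl,
    show Fin.castSucc (2:Fin 3) = (2:Fin 4) from rfl,
    show Fin.succAbove (3:Fin 4) 2 = 2 from rfl]
  ring

lemma M0block (lam z : ℂ) (om : ℝ) :
    M0 lam om - z • (1 : Matrix (Fin 2 ⊕ Fin 2) (Fin 2 ⊕ Fin 2) ℂ) =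
      Matrix.fromBlocks !![-z, -(1+om); om-1, -z] !![0, lam; -lam, 0]
        !![0, -lam; lam, 0] !![-z, -(1+om); om-1, -z] := by
  ext i j
  cases i <;> cases j <;> rename_i i j <;> fin_cases i <;> fin_cases j <;>
    simp [M0, alphaMat, Jmat, betaMat, ImSigma2, Sigma3, Matrix.mul_apply,
      Fintype.sum_sum_type, Fin.sum_univ_succ, Matrix.one_apply] <;> ring

/-- for `ω ∈ [-1,1]` and `λ ∈ ℂ`, the spectrum of `M₀(λ,ω)` is
`{±√(1−(ω+iλ)²), ±√(1−(ω−iλ)²)}`: `z` is an eigenvalue of `M₀(λ,ω)`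
(i.e. `det (M₀(λ,ω) − z·I) = 0`) iff `z² − 1 + (iλ − ω)² = 0` or `z² − 1 + (−iλ − ω)² = 0`. -/
theorem stmt2 (om : ℝ) (hom : om ∈ Set.Icc (-1 : ℝ) 1) (lam z : ℂ) :
    (M0 lam om - z • (1 : Matrix (Fin 2 ⊕ Fin 2) (Fin 2 ⊕ Fin 2) ℂ)).det = 0 ↔
      (z ^ 2 - 1 + (Complex.I * lam - om) ^ 2 = 0 ∨
       z ^ 2 - 1 + (-(Complex.I * lam) - om) ^ 2 = 0) := by
  have h1 : (M0 lam om - z • (1 : Matrix (Fin 2 ⊕ Fin 2) (Fin 2 ⊕ Fin 2) ℂ)).det =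
      ((Matrix.reindex finSumFinEquiv finSumFinEquiv) (M0 lam om - z • 1)).det := by
    simp
  have h2 : (Matrix.reindex finSumFinEquiv finSumFinEquiv) (M0 lam om - z • 1) =
      !![-z, -(1+om), 0, lam;
         om-1, -z, -lam, 0;
         0, -lam, -z, -(1+om);
         lam, 0, om-1, -z] := by
    rw [M0block]
    ext i j
    fin_cases i <;> fin_cases j <;> rfl
  have h : (M0 lam om - z • (1 : Matrix (Fin 2 ⊕ Fin 2) (Fin 2 ⊕ Fin 2) ℂ)).det =
      (z ^ 2 - 1 + (Complex.I * lam - om) ^ 2) *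
      (z ^ 2 - 1 + (-(Complex.I * lam) - om) ^ 2) := by
    rw [h1, h2, detfin4]
    norm_num [Matrix.cons_val_zero, Matrix.cons_val_one, Matrix.head_cons]
    ring_nf
    simp [Complex.I_sq]
    ring
  rw [h, mul_eq_zero]
end

section
/- With J, α, β the 4×4 matrices as above, the matrices J, α, β satisfy: J commutes with β-conjugation in the sense that for the matrix M₀(λ,ω) = αJβ − ωαJ − αλ, one has det(M₀(λ,ω) − z·I₄)² = det((Jλ − ω·I₄ + αJz + β)·αβ·(Jλ − ω·I₄ + αJz + β)·βα) = det((Jλ−ω)² − (1 − z²)·I₄). In particular, det(M₀(λ,ω) − z) = 0 iff det((Jλ−ω)² − (1−z²)) = 0. -/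
open Matrix

noncomputable def e4 : Fin 4 ≃ (Fin 2 ⊕ Fin 2) := (finSumFinEquiv (m := 2) (n := 2)).symm

lemma myDetFour (M : Matrix (Fin 4) (Fin 4) ℂ) : M.det =
   M 0 0 * (M 1 1*(M 2 2*M 3 3 - M 2 3*M 3 2) - M 1 2*(M 2 1*M 3 3 - M 2 3*M 3 1) + M 1 3*(M 2 1*M 3 2 - M 2 2*M 3 1))
 - M 0 1 * (M 1 0*(M 2 2*M 3 3 - M 2 3*M 3 2) - M 1 2*(M 2 0*M 3 3 - M 2 3*M 3 0) + M 1 3*(M 2 0*M 3 2 - M 2 2*M 3 0))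
 + M 0 2 * (M 1 0*(M 2 1*M 3 3 - M 2 3*M 3 1) - M 1 1*(M 2 0*M 3 3 - M 2 3*M 3 0) + M 1 3*(M 2 0*M 3 1 - M 2 1*M 3 0))
 - M 0 3 * (M 1 0*(M 2 1*M 3 2 - M 2 2*M 3 1) - M 1 1*(M 2 0*M 3 2 - M 2 2*M 3 0) + M 1 2*(M 2 0*M 3 1 - M 2 1*M 3 0)) := by
  rw [Matrix.det_succ_row_zero]
  simp [Fin.sum_univ_succ, Matrix.det_fin_three, Fin.succAbove, Matrix.submatrix_apply,
    Matrix.det_fin_zero, show Fin.succ 2 = (3:Fin 4) from rfl,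
    show Fin.castSucc 2 = (2:Fin 4) from rfl]
  ring

lemma detSum (M : Matrix (Fin 2 ⊕ Fin 2) (Fin 2 ⊕ Fin 2) ℂ) :
    M.det = (M.submatrix e4 e4).det := (Matrix.det_submatrix_equiv_self e4 M).symm

set_option maxHeartbeats 2000000 in
/-- the determinant identities
`det(M₀(λ,ω) − z·I)² = det((Jλ − ω + αJz + β)·αβ·(Jλ − ω + αJz + β)·βα)
 = det((Jλ − ω)² − (1 − z²)·I)`, and consequently
`det(M₀(λ,ω) − z) = 0 ↔ det((Jλ−ω)² − (1−z²)) = 0`. -/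
theorem stmt3 (om : ℝ) (lam z : ℂ) :
    ((M0 lam om - z • (1 : Matrix (Fin 2 ⊕ Fin 2) (Fin 2 ⊕ Fin 2) ℂ)).det) ^ 2
        = ((lam • Jmat - (om : ℂ) • 1 + z • (alphaMat * Jmat) + betaMat)
            * (alphaMat * betaMat)
            * (lam • Jmat - (om : ℂ) • 1 + z • (alphaMat * Jmat) + betaMat)
            * (betaMat * alphaMat)).det ∧
    ((M0 lam om - z • (1 : Matrix (Fin 2 ⊕ Fin 2) (Fin 2 ⊕ Fin 2) ℂ)).det) ^ 2
        = ((lam • Jmat - (om : ℂ) • 1) ^ 2 - (1 - z ^ 2) • 1).det ∧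
    ((M0 lam om - z • (1 : Matrix (Fin 2 ⊕ Fin 2) (Fin 2 ⊕ Fin 2) ℂ)).det = 0 ↔
      ((lam • Jmat - (om : ℂ) • 1) ^ 2 - (1 - z ^ 2) • 1).det = 0) := by
  have he0 : (finSumFinEquiv (m:=2) (n:=2)).symm 0 = Sum.inl 0 := by decide
  have he1 : (finSumFinEquiv (m:=2) (n:=2)).symm 1 = Sum.inl 1 := by decide
  have he2 : (finSumFinEquiv (m:=2) (n:=2)).symm 2 = Sum.inr 0 := by decide
  have he3 : (finSumFinEquiv (m:=2) (n:=2)).symm 3 = Sum.inr 1 := by decide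
  -- the shifted matrix
  have hA : ((M0 lam om - z • (1 : Matrix (Fin 2 ⊕ Fin 2) (Fin 2 ⊕ Fin 2) ℂ)).submatrix e4 e4)
      = !![-z, -1-(om:ℂ), 0, lam; -1+(om:ℂ), -z, -lam, 0; 0, -lam, -z, -1-(om:ℂ); lam, 0, -1+(om:ℂ), -z] := by
    ext i j
    fin_cases i <;> fin_cases j <;>
      simp [e4, M0, Jmat, alphaMat, betaMat, ImSigma2, Sigma3, Matrix.mul_apply,
        Fintype.sum_sum_type, Fin.sum_univ_two, Matrix.one_apply, he0, he1, he2, he3, Matrix.vecHead, Matrix.vecTail] <;> try ring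
  have hmid : (((lam • Jmat - (om : ℂ) • 1 + z • (alphaMat * Jmat) + betaMat)).submatrix e4 e4)
      = !![1-(om:ℂ), z, lam, 0; -z, -1-(om:ℂ), 0, lam; -lam, 0, 1-(om:ℂ), z; 0, -lam, -z, -1-(om:ℂ)] := by
    ext i j
    fin_cases i <;> fin_cases j <;>
      simp [e4, Jmat, alphaMat, betaMat, ImSigma2, Sigma3, Matrix.mul_apply,
        Fintype.sum_sum_type, Fin.sum_univ_two, Matrix.one_apply, he0, he1, he2, he3, Matrix.vecHead, Matrix.vecTail] <;> try ring
  have hab : ((alphaMat * betaMat).submatrix e4 e4)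
      = !![0,0,0,1; 0,0,1,0; 0,-1,0,0; -1,0,0,0] := by
    ext i j
    fin_cases i <;> fin_cases j <;>
      simp [e4, alphaMat, betaMat, ImSigma2, Sigma3, Matrix.mul_apply,
        Fintype.sum_sum_type, Fin.sum_univ_two, he0, he1, he2, he3, Matrix.vecHead, Matrix.vecTail]
  have hba : ((betaMat * alphaMat).submatrix e4 e4)
      = !![0,0,0,-1; 0,0,-1,0; 0,1,0,0; 1,0,0,0] := by
    ext i j
    fin_cases i <;> fin_cases j <;>
      simp [e4, alphaMat, betaMat, ImSigma2, Sigma3, Matrix.mul_apply,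
        Fintype.sum_sum_type, Fin.sum_univ_two, he0, he1, he2, he3, Matrix.vecHead, Matrix.vecTail]
  have hR : (((lam • Jmat - (om : ℂ) • 1) ^ 2 - (1 - z ^ 2) • 1).submatrix e4 e4)
      = !![-1+z^2+(om:ℂ)^2-lam^2, 0, -2*lam*(om:ℂ), 0; 0, -1+z^2+(om:ℂ)^2-lam^2, 0, -2*lam*(om:ℂ);
           2*lam*(om:ℂ), 0, -1+z^2+(om:ℂ)^2-lam^2, 0; 0, 2*lam*(om:ℂ), 0, -1+z^2+(om:ℂ)^2-lam^2] := by
    rw [pow_two]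
    ext i j
    fin_cases i <;> fin_cases j <;>
      simp [e4, Jmat, ImSigma2, Sigma3, Matrix.mul_apply,
        Fintype.sum_sum_type, Fin.sum_univ_two, Matrix.one_apply, he0, he1, he2, he3, Matrix.vecHead, Matrix.vecTail] <;>
      ring
  have dA : (M0 lam om - z • (1 : Matrix (Fin 2 ⊕ Fin 2) (Fin 2 ⊕ Fin 2) ℂ)).det
      = (-1+z^2+(om:ℂ)^2-lam^2)^2 + 4*lam^2*(om:ℂ)^2 := by
    rw [detSum, hA, myDetFour]
    simp only [Matrix.of_apply, Matrix.cons_val]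
    norm_num [Matrix.cons_val_zero, Matrix.cons_val_one, Matrix.head_cons]
    ring
  have dmid : ((lam • Jmat - (om : ℂ) • 1 + z • (alphaMat * Jmat) + betaMat)).det
      = (-1+z^2+(om:ℂ)^2-lam^2)^2 + 4*lam^2*(om:ℂ)^2 := by
    rw [detSum, hmid, myDetFour]
    simp only [Matrix.of_apply, Matrix.cons_val]
    norm_num [Matrix.cons_val_zero, Matrix.cons_val_one, Matrix.head_cons]
    ring
  have dab : (alphaMat * betaMat).det = 1 := by
    rw [detSum, hab, myDetFour]
    simp only [Matrix.of_apply, Matrix.cons_val]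
    norm_num [Matrix.cons_val_zero, Matrix.cons_val_one, Matrix.head_cons]
  have dba : (betaMat * alphaMat).det = 1 := by
    rw [detSum, hba, myDetFour]
    simp only [Matrix.of_apply, Matrix.cons_val]
    norm_num [Matrix.cons_val_zero, Matrix.cons_val_one, Matrix.head_cons]
  have dR : ((lam • Jmat - (om : ℂ) • 1) ^ 2 - (1 - z ^ 2) • 1).det
      = ((-1+z^2+(om:ℂ)^2-lam^2)^2 + 4*lam^2*(om:ℂ)^2)^2 := by
    rw [detSum, hR, myDetFour]
    simp only [Matrix.of_apply, Matrix.cons_val]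
    norm_num [Matrix.cons_val_zero, Matrix.cons_val_one, Matrix.head_cons]
    ring
  have h2 : ((M0 lam om - z • (1 : Matrix (Fin 2 ⊕ Fin 2) (Fin 2 ⊕ Fin 2) ℂ)).det) ^ 2
      = ((lam • Jmat - (om : ℂ) • 1) ^ 2 - (1 - z ^ 2) • 1).det := by
    rw [dA, dR]
  refine ⟨?_, h2, ?_⟩
  · rw [Matrix.det_mul, Matrix.det_mul, Matrix.det_mul, dmid, dab, dba, dA]
    ring
  · rw [← h2, pow_eq_zero_iff (two_ne_zero)]
end
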